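/- Let S be a standard symbol, i.e., a pair of strictly increasing sequences β = (β₁ < ... < β_{a₂}) and γ = (γ₁ < ... < γ_{a₁}) of positive integers with a₁ ≤ a₂ and β_k ≤ γ_k for all k ≤ a₁. Then the map ψ : {γ₁,...,γ_{a₁}} → {β₁,...,β_{a₂}} defined by γ⁰ = γ ∩ β and γ^l = {j ∈ γ \ (γ⁰ ∪ ... ∪ γ^{l-1}) : j - l ∈ β \ ψ(γ⁰ ∪ ... ∪ γ^{l-1})} with ψ(j) = j - l for j ∈ γ^l, is a well-defined injection satisfying ψ(j) ≤ j for all j ∈ γ. -/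

import Mathlib

open Finset

/-- Auxiliary data for Lusztig's construction: given rows `β` (top) and `γ` (bottom),
`glevAux β γ l = (assigned, used)` where `assigned` is the set of elements of `γ`
lying in `γ⁰ ∪ ⋯ ∪ γ^l` and `used` is the set of their images under `ψ`. -/
def glevAux (β γ : Finset ℕ) : ℕ → Finset ℕ × Finset ℕ
  | 0 => (γ ∩ β, γ ∩ β)
  | l + 1 =>
      let p := glevAux β γ l
      let new := (γ \ p.1).filter (fun j => l + 1 ≤ j ∧ j - (l + 1) ∈ β \ p.2)
      (p.1 ∪ new, p.2 ∪ new.image (fun j => j - (l + 1)))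

/-- The set `γ^l` of Lusztig's construction. -/
def glev (β γ : Finset ℕ) : ℕ → Finset ℕ
  | 0 => γ ∩ β
  | l + 1 =>
      let p := glevAux β γ l
      (γ \ p.1).filter (fun j => l + 1 ≤ j ∧ j - (l + 1) ∈ β \ p.2)

/-- The level of `j`: the `l` such that `j ∈ γ^l` (defaulting to `0`). -/
def lusLevel (β γ : Finset ℕ) (j : ℕ) : ℕ :=
  ((List.range (j + 1)).find? (fun l => decide (j ∈ glev β γ l))).getD 0

/-- Lusztig's injection `ψ : γ → β`, `ψ(j) = j - l` for `j ∈ γ^l`. -/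
def lusPsi (β γ : Finset ℕ) (j : ℕ) : ℕ := j - lusLevel β γ j

/-- The pairs of the standard symbol, recorded by their sources:
the set of `j ∈ γ` with `ψ(j) ≠ j`. -/
def lusPairs (β γ : Finset ℕ) : Finset ℕ := γ.filter (fun j => lusPsi β γ j ≠ j)

/-- Swapping the subset `P` of pairs of the standard symbol `(β, γ)`:
each `j ∈ P` moves to the top row and `ψ(j)` moves to the bottom row.
The result is `(top row, bottom row)`. -/
def swapSymbol (β γ : Finset ℕ) (P : Finset ℕ) : Finset ℕ × Finset ℕ :=
  ((β \ P.image (lusPsi β γ)) ∪ P, (γ \ P) ∪ P.image (lusPsi β γ))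

/-- The set `𝒞(S)` of symbols obtained from the standard symbol `S = (β, γ)`
by swapping subsets of its pairs. -/
def Cset (β γ : Finset ℕ) : Finset (Finset ℕ × Finset ℕ) :=
  (lusPairs β γ).powerset.image (swapSymbol β γ)

/-- A standard symbol: top row `β`, bottom row `γ`, both consisting of positive
integers, with `γ` no longer than `β` and the top row entrywise `≤` the bottom row. -/
def IsStandardSymbol (β γ : Finset ℕ) : Prop :=
  0 ∉ β ∧ 0 ∉ γ ∧ γ.card ≤ β.card ∧
    ∀ k < γ.card, (β.sort (· ≤ ·)).getD k 0 ≤ (γ.sort (· ≤ ·)).getD k 0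

/-- The multisegment `𝐦(λ, a) = Σ_k [k, k + λ_k − 1]` (segments as pairs of
endpoints, 1-indexed rows, empty segments discarded). -/
def mseg (a : ℕ) (l : Fin a → ℕ) : Multiset (ℕ × ℕ) :=
  (Finset.univ.filter (fun k : Fin a => 0 < l k)).val.map
    (fun k => (k.val + 1, k.val + l k))

/-- The multisegment attached to one row of a symbol: the row `β` corresponds to
`λ_k = β_k − k`, giving the segments `[k, β_k − 1]` for those `k` with `β_k > k`. -/
def msegRow (β : Finset ℕ) : Multiset (ℕ × ℕ) :=
  ↑(((List.range β.card).filter (fun k => k + 1 < (β.sort (· ≤ ·)).getD k 0)).map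
      (fun k => (k + 1, (β.sort (· ≤ ·)).getD k 0 - 1)))

/-- The multisegment `𝐦(S)` of a symbol `S = (top, bottom)`. -/
def msegSym (S : Finset ℕ × Finset ℕ) : Multiset (ℕ × ℕ) :=
  msegRow S.1 + msegRow S.2

/-- The total size of a multisegment: the sum of the lengths of its segments. -/
def msize (m : Multiset (ℕ × ℕ)) : ℕ := (m.map (fun s => s.2 + 1 - s.1)).sum

/-- `N_m(λ, a)`: the number of cells of the filled Young diagram of `(λ, a)`
containing the integer `m`; row `k` is filled with `k, k+1, …, k + λ_k − 1`. -/
def Ncells (a : ℕ) (l : Fin a → ℕ) (m : ℕ) : ℕ :=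
  ∑ k : Fin a, ((Finset.range (l k)).filter (fun c => k.val + 1 + c = m)).card

/-- `n(S, Σ)`: the number of pairs of the standard symbol `S = (β, γ)` swapped to
obtain `Σ` (the subset being unique, we sum the cardinalities of all matching subsets). -/
def nswap (β γ : Finset ℕ) (T : Finset ℕ × Finset ℕ) : ℕ :=
  ((lusPairs β γ).powerset.filter (fun P => swapSymbol β γ P = T)).sum Finset.card
section Aux
variable (β γ : Finset ℕ)

lemma glevAux_fst_succ (l : ℕ) :
    (glevAux β γ (l + 1)).1 = (glevAux β γ l).1 ∪ glev β γ (l + 1) := rfl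

lemma glevAux_snd_succ (l : ℕ) :
    (glevAux β γ (l + 1)).2
      = (glevAux β γ l).2 ∪ (glev β γ (l + 1)).image (fun j => j - (l + 1)) := rfl

lemma mem_glev_succ {j l : ℕ} :
    j ∈ glev β γ (l + 1) ↔
      j ∈ γ ∧ j ∉ (glevAux β γ l).1 ∧ l + 1 ≤ j ∧
        j - (l + 1) ∈ β ∧ j - (l + 1) ∉ (glevAux β γ l).2 := by
  simp [glev, Finset.mem_filter, Finset.mem_sdiff, and_assoc]

lemma glev_subset_gamma (l : ℕ) : glev β γ l ⊆ γ := by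
  cases l with
  | zero => exact Finset.inter_subset_left
  | succ l => exact (Finset.filter_subset _ _).trans Finset.sdiff_subset

lemma glevAux_fst_subset (l : ℕ) : (glevAux β γ l).1 ⊆ γ := by
  induction l with
  | zero => exact Finset.inter_subset_left
  | succ l ih =>
      rw [glevAux_fst_succ]
      exact Finset.union_subset ih (glev_subset_gamma β γ (l + 1))

lemma glev_subset_fst (l : ℕ) : glev β γ l ⊆ (glevAux β γ l).1 := by
  cases l with
  | zero => exact Finset.Subset.refl _
  | succ l => rw [glevAux_fst_succ]; exact Finset.subset_union_right

lemma glevAux_fst_mono : Monotone (fun l => (glevAux β γ l).1) := by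
  apply monotone_nat_of_le_succ
  intro l
  rw [glevAux_fst_succ]
  exact Finset.subset_union_left

lemma glevAux_snd_mono : Monotone (fun l => (glevAux β γ l).2) := by
  apply monotone_nat_of_le_succ
  intro l
  rw [glevAux_snd_succ]
  exact Finset.subset_union_left

lemma glev_le {j l : ℕ} (hj : j ∈ glev β γ l) : l ≤ j := by
  cases l with
  | zero => exact Nat.zero_le _
  | succ l => exact ((mem_glev_succ β γ).mp hj).2.2.1

lemma glev_psi_mem_beta {j l : ℕ} (hj : j ∈ glev β γ l) : j - l ∈ β := by
  cases l with
  | zero => simpa using (Finset.mem_inter.mp hj).2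
  | succ l => exact ((mem_glev_succ β γ).mp hj).2.2.2.1

lemma glev_psi_mem_snd {j l : ℕ} (hj : j ∈ glev β γ l) : j - l ∈ (glevAux β γ l).2 := by
  cases l with
  | zero => exact hj
  | succ l =>
      rw [glevAux_snd_succ]
      exact Finset.mem_union_right _ (Finset.mem_image_of_mem _ hj)

lemma glev_not_mem_of_lt {j l m : ℕ} (hlm : l < m) (hj : j ∈ glev β γ m) :
    j ∉ glev β γ l := by
  intro hl
  obtain ⟨m', rfl⟩ : ∃ m', m = m' + 1 := ⟨m - 1, by omega⟩
  have h1 : j ∉ (glevAux β γ m').1 := ((mem_glev_succ β γ).mp hj).2.1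
  exact h1 (glevAux_fst_mono β γ (by omega : l ≤ m') (glev_subset_fst β γ l hl))

lemma glev_unique {j l m : ℕ} (hl : j ∈ glev β γ l) (hm : j ∈ glev β γ m) : l = m := by
  rcases lt_trichotomy l m with h | h | h
  · exact absurd hl (glev_not_mem_of_lt β γ h hm)
  · exact h
  · exact absurd hm (glev_not_mem_of_lt β γ h hl)

lemma lusLevel_eq {j l : ℕ} (hj : j ∈ glev β γ l) : lusLevel β γ j = l := by
  unfold lusLevel
  rcases hfind : (List.range (j + 1)).find? (fun l => decide (j ∈ glev β γ l)) with _ | m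
  · exfalso
    have hlt : l < j + 1 := Nat.lt_succ_of_le (glev_le β γ hj)
    have := List.find?_eq_none.mp hfind l (by simpa [List.mem_range] using hlt)
    exact this (by simpa using hj)
  · have hm : j ∈ glev β γ m := by simpa using List.find?_some hfind
    simpa using glev_unique β γ hm hj

lemma lusPsi_eq {j l : ℕ} (hj : j ∈ glev β γ l) : lusPsi β γ j = j - l := by
  rw [lusPsi, lusLevel_eq β γ hj]

lemma glevAux_snd_char {u L : ℕ} (hu : u ∈ (glevAux β γ L).2) :
    ∃ l, l ≤ L ∧ ∃ j', j' ∈ glev β γ l ∧ u = j' - l := by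
  induction L with
  | zero => exact ⟨0, le_refl _, u, hu, by simp⟩
  | succ L ih =>
      rw [glevAux_snd_succ] at hu
      rcases Finset.mem_union.mp hu with hu | hu
      · obtain ⟨l, hl, r⟩ := ih hu
        exact ⟨l, by omega, r⟩
      · obtain ⟨j', hj', rfl⟩ := Finset.mem_image.mp hu
        exact ⟨L + 1, le_refl _, j', hj', rfl⟩

end Aux

section Count

lemma sorted_getD_le {M : List ℕ} (hs : M.Pairwise (· ≤ ·)) {x i : ℕ}
    (hi : i < (M.filter (fun y => decide (y ≤ x))).length) : M.getD i 0 ≤ x := by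
  induction M generalizing i with
  | nil => simp at hi
  | cons a t ih =>
      by_cases hax : a ≤ x
      · rw [List.filter_cons_of_pos (by simpa using hax)] at hi
        cases i with
        | zero => simpa using hax
        | succ i => exact ih hs.of_cons (by simpa using hi)
      · exfalso
        have ht : t.filter (fun y => decide (y ≤ x)) = [] := by
          apply List.filter_eq_nil_iff.mpr
          intro b hb
          have : a ≤ b := (List.pairwise_cons.mp hs).1 b hb
          simpa using by omega
        rw [List.filter_cons_of_neg (by simpa using hax), ht] at hi
        simp at hi

lemma card_filter_list (s : Finset ℕ) (x : ℕ) :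
    ((s.sort (· ≤ ·)).filter (fun y => decide (y ≤ x))).length = (s.filter (· ≤ x)).card := by
  have h := Finset.sort_eq s (· ≤ ·)
  calc ((s.sort (· ≤ ·)).filter (fun y => decide (y ≤ x))).length
      = Multiset.card (Multiset.filter (· ≤ x) ↑(s.sort (· ≤ ·))) := by
        rw [Multiset.filter_coe]; simp
    _ = (s.filter (· ≤ x)).card := by rw [h]; rfl

lemma standard_card_filter {β γ : Finset ℕ} (h : IsStandardSymbol β γ) (x : ℕ) :
    (γ.filter (· ≤ x)).card ≤ (β.filter (· ≤ x)).card := by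
  obtain ⟨-, -, hcard, hdom⟩ := h
  have hkM : (γ.filter (· ≤ x)).card
      = ((γ.sort (· ≤ ·)).filter (fun y => decide (y ≤ x))).length :=
    (card_filter_list γ x).symm
  have hkcard : (γ.filter (· ≤ x)).card ≤ γ.card := Finset.card_filter_le _ _
  have hLlen : (β.sort (· ≤ ·)).length = β.card := Finset.length_sort _
  have hMlen : (γ.sort (· ≤ ·)).length = γ.card := Finset.length_sort _
  set k := (γ.filter (· ≤ x)).card with hk
  have key : ∀ i < k, (β.sort (· ≤ ·)).getD i 0 ≤ x := by
    intro i hi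
    have h1 : (β.sort (· ≤ ·)).getD i 0 ≤ (γ.sort (· ≤ ·)).getD i 0 := hdom i (by omega)
    have h2 : (γ.sort (· ≤ ·)).getD i 0 ≤ x :=
      sorted_getD_le (Finset.pairwise_sort _ _) (by omega)
    omega
  calc k = (Finset.range k).card := (Finset.card_range k).symm
    _ ≤ (β.filter (· ≤ x)).card := by
        apply Finset.card_le_card_of_injOn (fun i => (β.sort (· ≤ ·)).getD i 0)
        · intro i hi
          rw [Finset.mem_coe, Finset.mem_range] at hi
          rw [Finset.mem_coe, Finset.mem_filter]
          refine ⟨?_, key i hi⟩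
          have hi' : i < (β.sort (· ≤ ·)).length := by omega
          beta_reduce
          rw [List.getD_eq_getElem _ 0 hi']
          have : (β.sort (· ≤ ·))[i] ∈ (β.sort (· ≤ ·)) := List.getElem_mem hi'
          rwa [← Finset.mem_sort (· ≤ ·)]
        · intro i hi j hj hij
          simp only [Finset.coe_range, Set.mem_Iio] at hi hj
          have hi' : i < (β.sort (· ≤ ·)).length := by omega
          have hj' : j < (β.sort (· ≤ ·)).length := by omega
          simp only [List.getD_eq_getElem _ 0 hi', List.getD_eq_getElem _ 0 hj'] at hij
          exact ((Finset.sort_nodup _ _).getElem_inj_iff).mp hij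

end Count

section Main
variable {β γ : Finset ℕ}

lemma exists_glev (h : IsStandardSymbol β γ) {j : ℕ} (hj : j ∈ γ) :
    ∃ l, j ∈ glev β γ l := by
  by_contra hne
  push_neg at hne
  have hnA : ∀ l, j ∉ (glevAux β γ l).1 := by
    intro l
    induction l with
    | zero => exact fun hc => hne 0 hc
    | succ l ih =>
        rw [glevAux_fst_succ]
        intro hc
        rcases Finset.mem_union.mp hc with hc | hc
        · exact ih hc
        · exact hne (l + 1) hc
  have Ebeta : ∀ b ∈ β, b ≤ j → b ∈ (glevAux β γ j).2 := by
    intro b hb hbj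
    rcases eq_or_lt_of_le hbj with rfl | hlt
    · exact absurd (Finset.mem_inter.mpr ⟨hj, hb⟩) (hne 0)
    · have hni := hne (j - b)
      rw [show j - b = (j - b - 1) + 1 from by omega, mem_glev_succ] at hni
      push_neg at hni
      have h2 := hni hj (hnA _) (by omega)
      rw [show j - (j - b - 1 + 1) = b from by omega] at h2
      exact glevAux_snd_mono β γ (by omega : j - b - 1 ≤ j) (h2 hb)
  have Epre : ∀ u ∈ (glevAux β γ j).2, u ≤ j →
      ∃ j' ∈ (glevAux β γ j).1.filter (· ≤ j), lusPsi β γ j' = u := by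
    intro u hu huj
    obtain ⟨l, hlL, j', hj', rfl⟩ := glevAux_snd_char β γ hu
    have hlj' : l ≤ j' := glev_le β γ hj'
    have hjle : j' ≤ j := by
      by_contra hgt
      push_neg at hgt
      cases l with
      | zero => omega
      | succ m =>
          have hmem := (mem_glev_succ β γ).mp hj'
          have hub : j' - (m + 1) ∈ β := hmem.2.2.2.1
          have hunA : j' - (m + 1) ∉ (glevAux β γ m).2 := hmem.2.2.2.2
          have hij : j - ((m + 1) - (j' - j)) = j' - (m + 1) := by omega
          rcases Nat.eq_zero_or_pos ((m + 1) - (j' - j)) with hi0 | hipos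
          · have hjb : j ∈ β := by rw [hi0] at hij; simpa [← hij] using hub
            exact hne 0 (Finset.mem_inter.mpr ⟨hj, hjb⟩)
          · have hni := hne ((m + 1) - (j' - j))
            rw [show (m + 1) - (j' - j) = ((m + 1) - (j' - j) - 1) + 1 from by omega,
              mem_glev_succ] at hni
            push_neg at hni
            have h2 := hni hj (hnA _) (by omega)
            rw [show j - ((m + 1) - (j' - j) - 1 + 1) = j' - (m + 1) from by omega] at h2
            exact hunA (glevAux_snd_mono β γ
              (by omega : (m + 1) - (j' - j) - 1 ≤ m) (h2 hub))
    refine ⟨j', Finset.mem_filter.mpr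
      ⟨glevAux_fst_mono β γ hlL (glev_subset_fst β γ l hj'), hjle⟩, lusPsi_eq β γ hj'⟩
  have S1 : β.filter (· ≤ j) ⊆ (glevAux β γ j).2.filter (· ≤ j) := by
    intro b hb
    rw [Finset.mem_filter] at hb ⊢
    exact ⟨Ebeta b hb.1 hb.2, hb.2⟩
  have S2 : (glevAux β γ j).2.filter (· ≤ j)
      ⊆ ((glevAux β γ j).1.filter (· ≤ j)).image (lusPsi β γ) := by
    intro u hu
    rw [Finset.mem_filter] at hu
    obtain ⟨j', hj', hpsi⟩ := Epre u hu.1 hu.2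
    exact Finset.mem_image.mpr ⟨j', hj', hpsi⟩
  have S3 : (glevAux β γ j).1.filter (· ≤ j) ⊆ (γ.filter (· ≤ j)).erase j := by
    intro a ha
    rw [Finset.mem_filter] at ha
    refine Finset.mem_erase.mpr
      ⟨?_, Finset.mem_filter.mpr ⟨glevAux_fst_subset β γ j ha.1, ha.2⟩⟩
    exact fun haj => hnA j (haj ▸ ha.1)
  have hjmem : j ∈ γ.filter (· ≤ j) := Finset.mem_filter.mpr ⟨hj, le_refl j⟩
  have hc1 := standard_card_filter h j
  have hc2 := Finset.card_le_card S1
  have hc3 := Finset.card_le_card S2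
  have hc4 := Finset.card_image_le
    (s := (glevAux β γ j).1.filter (· ≤ j)) (f := lusPsi β γ)
  have hc5 := Finset.card_le_card S3
  have hc6 := Finset.card_erase_lt_of_mem hjmem
  omega

lemma psi_inj_aux {j1 j2 l1 l2 : ℕ} (h1 : j1 ∈ glev β γ l1) (h2 : j2 ∈ glev β γ l2)
    (hle : l1 ≤ l2) (heq : j1 - l1 = j2 - l2) : j1 = j2 := by
  rcases eq_or_lt_of_le hle with rfl | hlt
  · have := glev_le β γ h1
    have := glev_le β γ h2
    omega
  · exfalso
    obtain ⟨m, rfl⟩ : ∃ m, l2 = m + 1 := ⟨l2 - 1, by omega⟩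
    have hmem := (mem_glev_succ β γ).mp h2
    have hunA : j2 - (m + 1) ∉ (glevAux β γ m).2 := hmem.2.2.2.2
    have h1m : j1 - l1 ∈ (glevAux β γ m).2 :=
      glevAux_snd_mono β γ (by omega : l1 ≤ m) (glev_psi_mem_snd β γ h1)
    rw [heq] at h1m
    exact hunA h1m

end Main


/-- For a standard symbol, Lusztig's `ψ` is a well-defined injection from the
bottom row `γ` into the top row `β` with `ψ(j) ≤ j` for all `j ∈ γ`. -/
theorem lusPsi_welldefined_injection (β γ : Finset ℕ) (h : IsStandardSymbol β γ) :
    (∀ j ∈ γ, ∃ l, j ∈ glev β γ l) ∧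
    (∀ j ∈ γ, lusPsi β γ j ∈ β ∧ lusPsi β γ j ≤ j) ∧
    Set.InjOn (lusPsi β γ) ↑γ := by
  refine ⟨fun j hj => exists_glev h hj, ?_, ?_⟩
  · intro j hj
    obtain ⟨l, hl⟩ := exists_glev h hj
    rw [lusPsi_eq β γ hl]
    exact ⟨glev_psi_mem_beta β γ hl, Nat.sub_le _ _⟩
  · intro j1 h1 j2 h2 heq
    rw [Finset.mem_coe] at h1 h2
    obtain ⟨l1, hl1⟩ := exists_glev h h1
    obtain ⟨l2, hl2⟩ := exists_glev h h2
    rw [lusPsi_eq β γ hl1, lusPsi_eq β γ hl2] at heq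
    rcases le_total l1 l2 with hle | hle
    · exact psi_inj_aux hl1 hl2 hle heq
    · exact (psi_inj_aux hl2 hl1 hle heq.symm).symm
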